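/- Let a ∈ (0,1) and let β₁, β₂ ∈ [−a/√(1−a²), a/√(1−a²)] with β₂ ≠ 0. If F₁(β₁) + F₁(β₂) = −πβ₂/√(1+β₂²), then β₁² > β₂². -/

import Mathlib

set_option maxHeartbeats 1000000


open Real Set

/-- The argument function `F₁(β)` in the short-time case. -/
noncomputable def F₁ (a β : ℝ) : ℝ :=
  -(β / Real.sqrt (1 + β^2)) * Real.arcsin (Real.sqrt ((1 - a^2) * (1 + β^2))) +
    Real.arcsin (β * Real.sqrt (1 - a^2) / a)

lemma F₁_odd (a β : ℝ) : F₁ a (-β) = -F₁ a β := by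
  simp only [F₁, neg_sq, neg_div, neg_mul, neg_neg, Real.arcsin_neg]
  ring

lemma F₁_hasDerivAt (a x : ℝ) (ha : a ∈ Set.Ioo (0:ℝ) 1)
    (hx : (Real.sqrt (1 - a^2))^2 * x^2 < a^2) :
    HasDerivAt (F₁ a)
      (-(Real.arcsin (Real.sqrt (1 - a^2) * Real.sqrt (1 + x^2)) / (Real.sqrt (1 + x^2))^3)
        + Real.sqrt (1 - a^2) / ((Real.sqrt (1 + x^2))^2 * Real.sqrt (a^2 - (1 - a^2) * x^2))) x := by
  obtain ⟨ha0, ha1⟩ := ha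
  set s := Real.sqrt (1 - a^2) with hs_def
  have h1a : (0:ℝ) ≤ 1 - a^2 := by nlinarith
  have hs2 : s^2 = 1 - a^2 := Real.sq_sqrt h1a
  have hs0 : 0 ≤ s := Real.sqrt_nonneg _
  have hx' : s^2 * x^2 < a^2 := hx
  have hx'' : (1 - a^2) * x^2 < a^2 := by rw [← hs2]; exact hx'
  set u := Real.sqrt (1 + x^2) with hu_def
  have hupos : 0 < u := Real.sqrt_pos.2 (by positivity)
  have hu2 : u^2 = 1 + x^2 := Real.sq_sqrt (by positivity)
  have hw_pos : 0 < a^2 - (1 - a^2) * x^2 := by linarith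
  set w := Real.sqrt (a^2 - (1 - a^2) * x^2) with hw_def
  have hwpos : 0 < w := Real.sqrt_pos.2 hw_pos
  have hw2 : w^2 = a^2 - (1 - a^2) * x^2 := Real.sq_sqrt hw_pos.le
  -- derivative of u
  have h_u : HasDerivAt (fun y : ℝ => Real.sqrt (1 + y^2)) (x / u) x := by
    have h0 : HasDerivAt (fun y : ℝ => 1 + y^2) (2 * x) x := by
      simpa using ((hasDerivAt_pow 2 x).const_add 1)
    have := h0.sqrt (by positivity)
    convert this using 1
    rw [← hu_def]
    field_simp
  -- derivative of x/u
  have h_div : HasDerivAt (fun y : ℝ => y / Real.sqrt (1 + y^2)) (1 / u^3) x := by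
    have := (hasDerivAt_id x).div h_u hupos.ne'
    refine this.congr_deriv ?_
    symm
    rw [← hu_def]
    simp only [id, one_mul]
    field_simp
    linear_combination (-1:ℝ) * hu2
  -- key bounds for s*u
  have hsu_pos : 0 < s * u := by
    have : 0 < s := Real.sqrt_pos.2 (by nlinarith)
    positivity
  have hsu_sq : (s * u)^2 = 1 - (a^2 - (1 - a^2) * x^2) := by
    rw [mul_pow, hs2, hu2]; ring
  have hsu_lt : s * u < 1 := by
    nlinarith [hsu_pos]
  -- derivative of inner sqrt: √((1-a²)(1+x²)) = s * √(1+x²)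
  have h_eq : (fun y : ℝ => Real.sqrt ((1 - a^2) * (1 + y^2))) = fun y => s * Real.sqrt (1 + y^2) := by
    funext y
    rw [Real.sqrt_mul h1a]
  have h_inner : HasDerivAt (fun y : ℝ => Real.sqrt ((1 - a^2) * (1 + y^2))) (s * (x / u)) x := by
    rw [h_eq]; exact h_u.const_mul s
  -- derivative of arcsin(√((1-a²)(1+x²)))
  have h_arc1 : HasDerivAt (fun y : ℝ => Real.arcsin (Real.sqrt ((1 - a^2) * (1 + y^2))))
      (1 / Real.sqrt (1 - (s * u)^2) * (s * (x / u))) x := by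
    have hval : Real.sqrt ((1 - a^2) * (1 + x^2)) = s * u := by
      rw [Real.sqrt_mul h1a]
    have harc : HasDerivAt Real.arcsin (1 / Real.sqrt (1 - (s * u)^2))
        (Real.sqrt ((1 - a^2) * (1 + x^2))) := by
      rw [hval]
      exact Real.hasDerivAt_arcsin (by linarith) (by linarith)
    have := harc.comp x h_inner
    exact this
  -- second term: arcsin(y * s / a)
  have hxs_a : (x * s / a)^2 < 1 := by
    rw [div_pow, mul_pow]
    rw [div_lt_one (by positivity)]
    nlinarith
  have hxs_a' : -1 < x * s / a ∧ x * s / a < 1 := abs_lt.mp (by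
    rw [← Real.sqrt_one, ← Real.sqrt_sq_eq_abs]
    exact Real.sqrt_lt_sqrt (sq_nonneg _) hxs_a)
  have h_lin : HasDerivAt (fun y : ℝ => y * s / a) (s / a) x := by
    have : HasDerivAt (fun y : ℝ => y * (s / a)) (s / a) x := by
      simpa using (hasDerivAt_id x).mul_const (s / a)
    convert this using 1
    funext y; ring
  have h_T2 : HasDerivAt (fun y : ℝ => Real.arcsin (y * s / a))
      (1 / Real.sqrt (1 - (x * s / a)^2) * (s / a)) x := by
    have harc := Real.hasDerivAt_arcsin (x := x * s / a) (by linarith [hxs_a'.1]) (by linarith [hxs_a'.2])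
    have := harc.comp x h_lin
    exact this
  -- combine
  have h_total := ((h_div.mul h_arc1).neg).add h_T2
  have hF : (fun y : ℝ => -(y / Real.sqrt (1 + y^2) *
      Real.arcsin (Real.sqrt ((1 - a^2) * (1 + y^2)))) + Real.arcsin (y * s / a)) = F₁ a := by
    funext y
    simp only [F₁]
    ring
  rw [← hF]
  refine h_total.congr_deriv ?_
  symm
  -- now prove the derivative values agree
  have hval : Real.sqrt ((1 - a^2) * (1 + x^2)) = s * u := by rw [Real.sqrt_mul h1a]
  have h1su : Real.sqrt (1 - (s * u)^2) = w := by rw [hsu_sq]; simp [hw_def]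
  have h1xs : Real.sqrt (1 - (x * s / a)^2) = w / a := by
    have : 1 - (x * s / a)^2 = (a^2 - (1 - a^2) * x^2) / a^2 := by
      field_simp
      nlinarith [hs2]
    rw [this, Real.sqrt_div hw_pos.le, Real.sqrt_sq ha0.le, hw_def]
  rw [hval, h1su, h1xs]
  have ha0' : a ≠ 0 := ha0.ne'
  field_simp
  linear_combination (-(s*u^2)) * hu2

lemma F₁_strictMonoOn (a : ℝ) (ha : a ∈ Set.Ioo (0:ℝ) 1) :
    StrictMonoOn (F₁ a)
      (Set.Icc (-(a / Real.sqrt (1 - a^2))) (a / Real.sqrt (1 - a^2))) := by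
  obtain ⟨ha0, ha1⟩ := ha
  have h1a : (0:ℝ) < 1 - a^2 := by nlinarith
  set s := Real.sqrt (1 - a^2) with hs_def
  have hs_pos : 0 < s := Real.sqrt_pos.2 h1a
  have hs2 : s^2 = 1 - a^2 := Real.sq_sqrt h1a.le
  apply strictMonoOn_of_deriv_pos (convex_Icc _ _)
  · -- continuity
    apply Continuous.continuousOn
    unfold F₁
    apply Continuous.add
    · apply Continuous.mul
      · apply Continuous.neg
        apply Continuous.div continuous_id (by continuity)
        intro x
        exact (Real.sqrt_pos.2 (by positivity)).ne'
      · exact Real.continuous_arcsin.comp (by continuity)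
    · exact Real.continuous_arcsin.comp (by continuity)
  · intro x hx
    rw [interior_Icc] at hx
    obtain ⟨hx1, hx2⟩ := hx
    have hxx : s^2 * x^2 < a^2 := by
      have habs : |x| < a / s := abs_lt.mpr ⟨hx1, hx2⟩
      have h1 : x^2 < (a / s)^2 := by
        calc x^2 = |x|^2 := (sq_abs x).symm
        _ < (a / s)^2 := by
          apply sq_lt_sq' _ habs
          linarith [abs_nonneg x]
      have hs2pos : 0 < s^2 := by positivity
      have h2 : x^2 * s^2 < (a / s)^2 * s^2 := mul_lt_mul_of_pos_right h1 hs2pos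
      have h3 : (a / s)^2 * s^2 = a^2 := by
        rw [div_pow]; field_simp
      nlinarith [h2, h3]
    have hD := F₁_hasDerivAt a x ⟨ha0, ha1⟩ hxx
    rw [hD.deriv]
    -- positivity of the derivative
    set u := Real.sqrt (1 + x^2) with hu_def
    have hupos : 0 < u := Real.sqrt_pos.2 (by positivity)
    have hu2 : u^2 = 1 + x^2 := Real.sq_sqrt (by positivity)
    have hw_pos : 0 < a^2 - (1 - a^2) * x^2 := by nlinarith [hs2]
    set w := Real.sqrt (a^2 - (1 - a^2) * x^2) with hw_def
    have hwpos : 0 < w := Real.sqrt_pos.2 hw_pos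
    have hw2 : w^2 = a^2 - (1 - a^2) * x^2 := Real.sq_sqrt hw_pos.le
    have hsu_pos : 0 < s * u := by positivity
    have hsu_sq : (s * u)^2 = 1 - (a^2 - (1 - a^2) * x^2) := by rw [mul_pow, hs2, hu2]; ring
    have hsu_lt : s * u < 1 := by nlinarith
    set θ := Real.arcsin (s * u) with hθ_def
    have hθ_pos : 0 < θ := Real.arcsin_pos.2 hsu_pos
    have hθ_lt : θ < Real.pi / 2 := by
      rw [hθ_def]
      exact Real.arcsin_lt_pi_div_two.2 hsu_lt
    have htan : Real.tan θ = s * u / w := by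
      rw [Real.tan_eq_sin_div_cos, hθ_def, Real.sin_arcsin (by linarith) hsu_lt.le,
        Real.cos_arcsin, hsu_sq]
      simp [hw_def]
    have hkey : θ < s * u / w := by
      rw [← htan]
      exact Real.lt_tan hθ_pos hθ_lt
    -- derivative = -θ/u³ + s/(u²w) > 0  ⟺  θ < s u / w
    have : θ / u^3 < s / (u^2 * w) := by
      rw [div_lt_div_iff₀ (by positivity) (by positivity)]
      calc θ * (u^2 * w) = θ * w * u^2 := by ring
        _ < (s * u / w) * w * u^2 := by
          apply mul_lt_mul_of_pos_right _ (by positivity)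
          exact mul_lt_mul_of_pos_right hkey hwpos
        _ = s * u^3 := by field_simp
    linarith

/-- If `β₂ ≠ 0` and `F₁(β₁) + F₁(β₂) = −πβ₂/√(1+β₂²)`, then `β₁² > β₂²`. -/
theorem beta_sq_comparison (a β₁ β₂ : ℝ) (ha : a ∈ Set.Ioo (0:ℝ) 1)
    (hβ₁ : β₁ ∈ Set.Icc (-(a / Real.sqrt (1 - a^2))) (a / Real.sqrt (1 - a^2)))
    (hβ₂ : β₂ ∈ Set.Icc (-(a / Real.sqrt (1 - a^2))) (a / Real.sqrt (1 - a^2)))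
    (hne : β₂ ≠ 0)
    (hsum : F₁ a β₁ + F₁ a β₂ = -(Real.pi * β₂ / Real.sqrt (1 + β₂^2))) :
    β₁^2 > β₂^2 := by
  have hmono := F₁_strictMonoOn a ha
  have hu2pos : 0 < Real.sqrt (1 + β₂^2) := Real.sqrt_pos.2 (by positivity)
  have hmem2 : -β₂ ∈ Set.Icc (-(a / Real.sqrt (1 - a^2))) (a / Real.sqrt (1 - a^2)) := by
    constructor
    · exact neg_le_neg hβ₂.2
    · rw [← neg_neg (a / Real.sqrt (1 - a^2))]; exact neg_le_neg hβ₂.1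
  rcases lt_or_gt_of_ne hne with h2neg | h2pos
  · -- β₂ < 0: F₁ β₁ > F₁ (-β₂), so β₁ > -β₂ > 0
    have hrhs : 0 < -(Real.pi * β₂ / Real.sqrt (1 + β₂^2)) := by
      rw [neg_pos]
      apply div_neg_of_neg_of_pos _ hu2pos
      exact mul_neg_of_pos_of_neg Real.pi_pos h2neg
    have h : F₁ a (-β₂) < F₁ a β₁ := by
      rw [F₁_odd]
      linarith
    have hlt : -β₂ < β₁ := (hmono.lt_iff_lt hmem2 hβ₁).mp h
    nlinarith
  · -- β₂ > 0: F₁ β₁ < F₁ (-β₂), so β₁ < -β₂ < 0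
    have hrhs : -(Real.pi * β₂ / Real.sqrt (1 + β₂^2)) < 0 := by
      rw [neg_lt, neg_zero]
      apply div_pos _ hu2pos
      exact mul_pos Real.pi_pos h2pos
    have h : F₁ a β₁ < F₁ a (-β₂) := by
      rw [F₁_odd]
      linarith
    have hlt : β₁ < -β₂ := (hmono.lt_iff_lt hβ₁ hmem2).mp h
    nlinarith
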